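/- arXiv:2307.05625 — 2 statements merged into one kernel-verified Lean document; each statement's English description precedes it below -/
import Mathlib

section
/- Let a, c, r be integers with a ≥ c ≥ r ≥ 1. Then, in ℚ(q): X_r := (−1)^r q^{−cr+(r²+3r)/2} · ((1+q²)(1+q⁴)⋯(1+q^{2r})) / ((1−q²)^r [a][a−1]⋯[a−r+1]) lies in q^{r(a−c+1)} A₀, and Y_r := (−1)^r q^{−2cr+2r²+r} · ([2r−1][2r−3]⋯[3][1]) / ([2a][2a−2]⋯[2a−2r+2]) lies in q^{2r(a−c+1)} A₀. -/
namespace OSP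

/-- The base field `ℚ(q)`. -/
abbrev K : Type := RatFunc ℚ

/-- The indeterminate `q`. -/
noncomputable def q : K := RatFunc.X

/-- The quantum integer `[s] = (q^s − q^{−s})/(q − q^{−1})`. -/
noncomputable def qn (z : K) (s : ℕ) : K := (z ^ s - z⁻¹ ^ s) / (z - z⁻¹)

/-- `A₀ ⊆ ℚ(q)`: the subring of rational functions regular at `q = 0`. -/
def A0 : Set K :=
  {f | ∃ p r : Polynomial ℚ, r.coeff 0 ≠ 0 ∧
    f = algebraMap (Polynomial ℚ) K p / algebraMap (Polynomial ℚ) K r}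

lemma hq0 : (q : K) ≠ 0 := RatFunc.X_ne_zero

lemma one_sub_q_pow_ne (k : ℕ) (hk : 1 ≤ k) : (1 : K) - q ^ k ≠ 0 := by
  have h : (1:K) - q^k = algebraMap (Polynomial ℚ) K (1 - Polynomial.X ^ k) := by
    simp [q, RatFunc.algebraMap_X]
  rw [h]
  apply RatFunc.algebraMap_ne_zero
  intro h'
  have := congrArg (Polynomial.eval 0) h'
  simp [zero_pow (by omega : k ≠ 0)] at this

lemma h1q2 : (1:K) - q^2 ≠ 0 := one_sub_q_pow_ne 2 (by norm_num)

lemma hqq : (q:K) - q⁻¹ ≠ 0 := by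
  intro h
  apply h1q2
  have h2 : q * (q - q⁻¹) = q^2 - 1 := by field_simp [hq0]
  rw [h] at h2
  simp at h2
  linear_combination h2

lemma qn_eq (s : ℕ) (hs : 1 ≤ s) :
    qn q s = (1 - q ^ (2*s)) / ((1 - q^2) * q ^ (s-1)) := by
  obtain ⟨m, rfl⟩ := Nat.exists_eq_add_of_le hs
  rw [qn, div_eq_div_iff hqq (mul_ne_zero h1q2 (pow_ne_zero _ hq0))]
  simp only [Nat.add_sub_cancel, Nat.add_sub_cancel_left]
  field_simp [hq0]
  have e : q * q⁻¹ = 1 := mul_inv_cancel₀ hq0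
  have e2 : q ^ m * q⁻¹ ^ m = 1 := by rw [← mul_pow, e, one_pow]
  linear_combination (q ^ 2 - 1) * (q ^ m * q⁻¹ ^ m * e + e2)
lemma prod_qn (r : ℕ) (g : ℕ → ℕ) (hg : ∀ t ∈ Finset.range r, 1 ≤ g t) :
    ∏ t ∈ Finset.range r, qn q (g t)
      = (∏ t ∈ Finset.range r, (1 - q ^ (2 * g t))) /
        ((1 - q^2)^r * q ^ (∑ t ∈ Finset.range r, (g t - 1))) := by
  rw [Finset.prod_congr rfl (fun t ht => qn_eq (g t) (hg t ht)),
    Finset.prod_div_distrib, Finset.prod_mul_distrib, Finset.prod_const,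
    Finset.prod_pow_eq_pow_sum, Finset.card_range]

lemma prod_one_sub_ne (r : ℕ) (g : ℕ → ℕ) (hg : ∀ t ∈ Finset.range r, 1 ≤ g t) :
    ∏ t ∈ Finset.range r, ((1:K) - q ^ (2 * g t)) ≠ 0 :=
  Finset.prod_ne_zero_iff.2 fun t ht => one_sub_q_pow_ne _ (by have := hg t ht; omega)
lemma sumA (a : ℕ) : ∀ n, n ≤ a → ((∑ t ∈ Finset.range n, (a - t - 1) : ℕ) : ℤ) * 2
    = 2*n*a - n*n - n := by
  intro n
  induction n with
  | zero => simp
  | succ k ih =>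
    intro h
    rw [Finset.sum_range_succ]
    have hy : ((a - k - 1 : ℕ) : ℤ) = (a:ℤ) - k - 1 := by omega
    have := ih (by omega)
    push_cast
    push_cast at hy this
    nlinarith [this, hy]

lemma sumB (a : ℕ) : ∀ n, n ≤ a → ((∑ t ∈ Finset.range n, (2*(a - t) - 1) : ℕ) : ℤ)
    = 2*n*a - n*n := by
  intro n
  induction n with
  | zero => simp
  | succ k ih =>
    intro h
    rw [Finset.sum_range_succ]
    have hy : ((2*(a - k) - 1 : ℕ) : ℤ) = 2*((a:ℤ) - k) - 1 := by omega
    have := ih (by omega)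
    push_cast
    push_cast at hy this
    nlinarith [this, hy]

lemma sumC : ∀ n : ℕ, ((∑ t ∈ Finset.range n, (2*t+1 - 1) : ℕ) : ℤ) = n*n - n := by
  intro n
  induction n with
  | zero => simp
  | succ k ih =>
    rw [Finset.sum_range_succ]
    push_cast
    push_cast at ih
    nlinarith [ih]
lemma coeff_zero_prod_one_sub (r : ℕ) (g : ℕ → ℕ) (hg : ∀ t ∈ Finset.range r, 1 ≤ g t) :
    (∏ t ∈ Finset.range r, ((1:Polynomial ℚ) - Polynomial.X ^ (g t))).coeff 0 = 1 := by
  rw [← Polynomial.constantCoeff_apply, map_prod]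
  apply Finset.prod_eq_one
  intro t ht
  have := hg t ht
  simp [Polynomial.constantCoeff_apply, Polynomial.coeff_X_pow]
  omega

lemma algMap_prod (r : ℕ) (h : ℕ → Polynomial ℚ) :
    algebraMap (Polynomial ℚ) K (∏ t ∈ Finset.range r, h t)
      = ∏ t ∈ Finset.range r, algebraMap (Polynomial ℚ) K (h t) := map_prod _ _ _

set_option maxHeartbeats 2000000 in
/-- For integers `a ≥ c ≥ r ≥ 1`, one has
`X_r = (−1)^r q^{−cr+(r²+3r)/2} ((1+q²)⋯(1+q^{2r}))/((1−q²)^r [a]⋯[a−r+1])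
∈ q^{r(a−c+1)} A₀` and
`Y_r = (−1)^r q^{−2cr+2r²+r} ([2r−1][2r−3]⋯[1])/([2a][2a−2]⋯[2a−2r+2])
∈ q^{2r(a−c+1)} A₀`. -/
theorem statement18 (a c r : ℕ) (h1 : r ≤ c) (h2 : c ≤ a) (hr : 1 ≤ r) :
    (∃ f ∈ A0,
      (-1 : K) ^ r * q ^ (-((c : ℤ) * r) + ((r : ℤ) ^ 2 + 3 * r) / 2) *
          (∏ t ∈ Finset.range r, (1 + q ^ (2 * (t + 1)))) /
          ((1 - q ^ 2) ^ r * ∏ t ∈ Finset.range r, qn q (a - t)) =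
        q ^ (r * (a - c + 1)) * f) ∧
    (∃ f ∈ A0,
      (-1 : K) ^ r * q ^ (-(2 * (c : ℤ) * r) + 2 * (r : ℤ) ^ 2 + r) *
          (∏ t ∈ Finset.range r, qn q (2 * t + 1)) /
          (∏ t ∈ Finset.range r, qn q (2 * (a - t))) =
        q ^ (2 * r * (a - c + 1)) * f) := by
  have hga : ∀ t ∈ Finset.range r, 1 ≤ a - t := by
    intro t ht; rw [Finset.mem_range] at ht; omega
  constructor
  · -- Part 1
    set p1 : Polynomial ℚ := (-1)^r * ∏ t ∈ Finset.range r, (1 + Polynomial.X ^ (2*(t+1))) with hp1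
    set rp1 : Polynomial ℚ := ∏ t ∈ Finset.range r, (1 - Polynomial.X ^ (2*(a - t))) with hrp1
    refine ⟨algebraMap (Polynomial ℚ) K p1 / algebraMap (Polynomial ℚ) K rp1,
      ⟨p1, rp1, ?_, rfl⟩, ?_⟩
    · rw [hrp1, coeff_zero_prod_one_sub r _ (fun t ht => by have := hga t ht; omega)]
      norm_num
    · have hP : algebraMap (Polynomial ℚ) K p1
          = (-1:K)^r * ∏ t ∈ Finset.range r, (1 + q ^ (2*(t+1))) := by
        rw [hp1, map_mul, map_pow, map_neg, map_one, algMap_prod]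
        congr 1
        refine Finset.prod_congr rfl fun t _ => ?_
        rw [map_add, map_one, map_pow, q, RatFunc.algebraMap_X]
      have hR : algebraMap (Polynomial ℚ) K rp1
          = ∏ t ∈ Finset.range r, ((1:K) - q ^ (2*(a - t))) := by
        rw [hrp1, algMap_prod]
        refine Finset.prod_congr rfl fun t _ => ?_
        rw [map_sub, map_one, map_pow, q, RatFunc.algebraMap_X]
      rw [hP, hR, prod_qn r (fun t => a - t) hga]
      set S : ℕ := ∑ t ∈ Finset.range r, (a - t - 1) with hS
      have hS2 : (S:ℤ) * 2 = 2*r*a - r*r - r := sumA a r (le_trans h1 h2)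
      have heven : ((2:ℤ)) ∣ ((r:ℤ)^2 + 3*r) := by
        obtain ⟨k, hk⟩ := Int.even_mul_succ_self (r:ℤ)
        exact ⟨k + r, by nlinarith [hk]⟩
      have hdiv : ((r:ℤ)^2 + 3*r)/2 * 2 = (r:ℤ)^2 + 3*r := Int.ediv_mul_cancel heven
      have hN : ((r * (a - c + 1) : ℕ) : ℤ) = (r:ℤ) * ((a:ℤ) - c + 1) := by
        push_cast [Nat.cast_sub h2]; ring
      have hEZ : -((c : ℤ) * r) + ((r : ℤ) ^ 2 + 3 * r) / 2
          = ((r * (a - c + 1) : ℕ) : ℤ) - (S:ℤ) := by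
        rw [hN]; nlinarith [hS2, hdiv]
      rw [hEZ, zpow_sub₀ hq0, zpow_natCast, zpow_natCast]
      have hRne : ∏ t ∈ Finset.range r, ((1:K) - q ^ (2*(a - t))) ≠ 0 :=
        prod_one_sub_ne r _ hga
      field_simp [hq0, h1q2, hRne]
  · -- Part 2
    have hg1 : ∀ t ∈ Finset.range r, 1 ≤ 2*t + 1 := fun t _ => by omega
    have hg2 : ∀ t ∈ Finset.range r, 1 ≤ 2*(a - t) := fun t ht => by have := hga t ht; omega
    set p2 : Polynomial ℚ := (-1)^r * ∏ t ∈ Finset.range r, (1 - Polynomial.X ^ (2*(2*t+1))) with hp2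
    set rp2 : Polynomial ℚ := ∏ t ∈ Finset.range r, (1 - Polynomial.X ^ (2*(2*(a - t)))) with hrp2
    refine ⟨algebraMap (Polynomial ℚ) K p2 / algebraMap (Polynomial ℚ) K rp2,
      ⟨p2, rp2, ?_, rfl⟩, ?_⟩
    · rw [hrp2, coeff_zero_prod_one_sub r _ (fun t ht => by have := hga t ht; omega)]
      norm_num
    · have hP : algebraMap (Polynomial ℚ) K p2
          = (-1:K)^r * ∏ t ∈ Finset.range r, ((1:K) - q ^ (2*(2*t+1))) := by
        rw [hp2, map_mul, map_pow, map_neg, map_one, algMap_prod]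
        congr 1
        refine Finset.prod_congr rfl fun t _ => ?_
        rw [map_sub, map_one, map_pow, q, RatFunc.algebraMap_X]
      have hR : algebraMap (Polynomial ℚ) K rp2
          = ∏ t ∈ Finset.range r, ((1:K) - q ^ (2*(2*(a - t)))) := by
        rw [hrp2, algMap_prod]
        refine Finset.prod_congr rfl fun t _ => ?_
        rw [map_sub, map_one, map_pow, q, RatFunc.algebraMap_X]
      rw [hP, hR, prod_qn r (fun t => 2*t + 1) hg1, prod_qn r (fun t => 2*(a - t)) hg2]
      set S1 : ℕ := ∑ t ∈ Finset.range r, (2*t + 1 - 1) with hS1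
      set S2 : ℕ := ∑ t ∈ Finset.range r, (2*(a - t) - 1) with hS2d
      have hS1e : (S1:ℤ) = (r:ℤ)*r - r := sumC r
      have hS2e : (S2:ℤ) = 2*r*a - (r:ℤ)*r := sumB a r (le_trans h1 h2)
      have hN : ((2 * r * (a - c + 1) : ℕ) : ℤ) = 2 * (r:ℤ) * ((a:ℤ) - c + 1) := by
        push_cast [Nat.cast_sub h2]; ring
      have hEZ : -(2 * (c : ℤ) * r) + 2 * (r : ℤ) ^ 2 + r
          = ((2 * r * (a - c + 1) : ℕ) : ℤ) + (S1:ℤ) - (S2:ℤ) := by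
        rw [hN]; nlinarith [hS1e, hS2e]
      rw [hEZ, zpow_sub₀ hq0, zpow_add₀ hq0, zpow_natCast, zpow_natCast, zpow_natCast]
      have hR1ne : ∏ t ∈ Finset.range r, ((1:K) - q ^ (2*(2*t+1))) ≠ 0 :=
        prod_one_sub_ne r _ hg1
      have hR2ne : ∏ t ∈ Finset.range r, ((1:K) - q ^ (2*(2*(a - t)))) ≠ 0 :=
        prod_one_sub_ne r _ hg2
      field_simp [hq0, h1q2, hR1ne, hR2ne]
end OSP
end

section
/- Let a ≥ c ≥ 0 be integers and 0 ≤ r ≤ c. Define z(x,y,w) = −x(x−1)/2 − y(y−1) − w(w−1)/2 for integers x, y, w, set X_0 = q^{−a(a−1)/2 − c(c−1)/2 + c} ∈ ℚ(q), and for r ≥ 1 set X_r = q^{rc−(3r²+r)/2} · ((1+(−q²))(1+(−q²)²)⋯(1+(−q²)^r)) / ((1−q²)^r {a}{a−1}⋯{a−r+1}) · X_0. Then there is a sign σ ∈ {1, −1} such that σ q^{−d_r} X_r ∈ 1 + q A₀, where d_r = z(a−r, r, c−r) + (c−r); in particular X_r ∈ q^{d_r} A₀ and X_r ∉ q^{d_r+1}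 A₀. -/
namespace OSP

/-- `{s} = ((−q)^s − q^{−s})/(−q − q^{−1})` (and more generally in base `z`). -/
noncomputable def qb (z : K) (s : ℕ) : K := ((-z) ^ s - z⁻¹ ^ s) / (-z - z⁻¹)

/-- `z(x,y,w) = −x(x−1)/2 − y(y−1) − w(w−1)/2`. -/
def zf (x y w : ℤ) : ℤ := -(x * (x - 1)) / 2 - y * (y - 1) - w * (w - 1) / 2

/-- The element `X_r` of Appendix A.2:
`X_0 = q^{−a(a−1)/2 − c(c−1)/2 + c}` and
`X_r = q^{rc−(3r²+r)/2} ((1+(−q²))⋯(1+(−q²)^r))/((1−q²)^r {a}{a−1}⋯{a−r+1}) X_0`. -/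
noncomputable def X19 (a c : ℕ) (r : ℕ) : K :=
  q ^ ((r : ℤ) * c - (3 * (r : ℤ) ^ 2 + r) / 2) *
      (∏ t ∈ Finset.range r, (1 + (-(q ^ 2)) ^ (t + 1))) /
      ((1 - q ^ 2) ^ r * ∏ t ∈ Finset.range r, qb q (a - t)) *
    q ^ (-((a : ℤ) * ((a : ℤ) - 1)) / 2 - (c : ℤ) * ((c : ℤ) - 1) / 2 + c)

lemma q_ne_zero : q ≠ 0 := RatFunc.X_ne_zero

lemma algMap_ne_zero' {p : Polynomial ℚ} (h : p.coeff 0 ≠ 0) :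
    algebraMap (Polynomial ℚ) K p ≠ 0 := by
  apply RatFunc.algebraMap_ne_zero
  intro hp
  rw [hp] at h
  simp at h

lemma algMap_ne_zero {p : Polynomial ℚ} (h : p.coeff 0 = 1) :
    algebraMap (Polynomial ℚ) K p ≠ 0 :=
  algMap_ne_zero' (h ▸ one_ne_zero)

/-- `f = q^d · N/D` with `N, D` polynomials with constant coefficient 1. -/
def Good (d : ℤ) (f : K) : Prop :=
  ∃ N D : Polynomial ℚ, N.coeff 0 = 1 ∧ D.coeff 0 = 1 ∧
    f = q ^ d * algebraMap (Polynomial ℚ) K N / algebraMap (Polynomial ℚ) K D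

lemma Good.zpow (d : ℤ) : Good d (q ^ d) := ⟨1, 1, by simp, by simp, by simp⟩

lemma Good.map {p : Polynomial ℚ} (h : p.coeff 0 = 1) :
    Good 0 (algebraMap (Polynomial ℚ) K p) := ⟨p, 1, h, by simp, by simp⟩

lemma coeff0_mul (p₁ p₂ : Polynomial ℚ) :
    (p₁ * p₂).coeff 0 = p₁.coeff 0 * p₂.coeff 0 := by
  simp [Polynomial.coeff_zero_eq_eval_zero]

lemma Good.mul {d e : ℤ} {f g : K} (hf : Good d f) (hg : Good e g) :
    Good (d + e) (f * g) := by
  obtain ⟨N₁, D₁, hN₁, hD₁, rfl⟩ := hf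
  obtain ⟨N₂, D₂, hN₂, hD₂, rfl⟩ := hg
  refine ⟨N₁ * N₂, D₁ * D₂, ?_, ?_, ?_⟩
  · rw [coeff0_mul, hN₁, hN₂, one_mul]
  · rw [coeff0_mul, hD₁, hD₂, one_mul]
  · have h1 := algMap_ne_zero hD₁
    have h2 := algMap_ne_zero hD₂
    rw [zpow_add₀ q_ne_zero, map_mul, map_mul]
    field_simp

lemma Good.div {d e : ℤ} {f g : K} (hf : Good d f) (hg : Good e g) :
    Good (d - e) (f / g) := by
  obtain ⟨N₁, D₁, hN₁, hD₁, rfl⟩ := hf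
  obtain ⟨N₂, D₂, hN₂, hD₂, rfl⟩ := hg
  refine ⟨N₁ * D₂, D₁ * N₂, ?_, ?_, ?_⟩
  · rw [coeff0_mul, hN₁, hD₂, one_mul]
  · rw [coeff0_mul, hD₁, hN₂, one_mul]
  · have h1 := algMap_ne_zero hD₁
    have h2 := algMap_ne_zero hD₂
    have h3 := algMap_ne_zero hN₂
    have h4 := algMap_ne_zero hN₁
    have hq := q_ne_zero
    rw [zpow_sub₀ q_ne_zero, map_mul, map_mul]
    have hqe : q ^ e ≠ 0 := zpow_ne_zero _ hq
    have hqd : q ^ d ≠ 0 := zpow_ne_zero _ hq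
    field_simp

lemma Good.congr {d d' : ℤ} {f : K} (h : Good d f) (hd : d = d') : Good d' f := hd ▸ h

lemma Good.prod {n : ℕ} {e : ℕ → ℤ} {f : ℕ → K}
    (h : ∀ t < n, Good (e t) (f t)) :
    Good (∑ t ∈ Finset.range n, e t) (∏ t ∈ Finset.range n, f t) := by
  induction n with
  | zero => exact ⟨1, 1, by simp, by simp, by simp⟩
  | succ n ih =>
    rw [Finset.sum_range_succ, Finset.prod_range_succ]
    exact (ih fun t ht => h t (ht.trans n.lt_succ_self)).mul (h n n.lt_succ_self)

lemma one_add_q_sq_ne_zero : (1 : K) + q ^ 2 ≠ 0 := by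
  have h : (1 : K) + q ^ 2 = algebraMap (Polynomial ℚ) K (1 + Polynomial.X ^ 2) := by
    simp [q, RatFunc.algebraMap_X]
  rw [h]
  apply algMap_ne_zero
  simp [Polynomial.coeff_zero_eq_eval_zero]

lemma qb_eq (s : ℕ) (hs : 1 ≤ s) :
    qb q s = q ^ (1 - (s : ℤ)) *
      algebraMap (Polynomial ℚ) K (1 - (-1) ^ s * Polynomial.X ^ (2 * s)) /
      algebraMap (Polynomial ℚ) K (1 + Polynomial.X ^ 2) := by
  obtain ⟨m, rfl⟩ := Nat.exists_eq_add_of_le hs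
  have hq := q_ne_zero
  have hd : (1 : K) + q ^ 2 ≠ 0 := one_add_q_sq_ne_zero
  have hden : -q - q⁻¹ ≠ 0 := by
    intro h
    apply hd
    have h8 : q * (-q - q⁻¹) = -(1 + q ^ 2) := by field_simp; ring
    rw [h, mul_zero] at h8
    linear_combination h8
  have hmap : algebraMap (Polynomial ℚ) K (1 - (-1) ^ (1 + m) * Polynomial.X ^ (2 * (1 + m)))
      = 1 - (-1) ^ (1 + m) * q ^ (2 * (1 + m)) := by
    simp [q, RatFunc.algebraMap_X]
  have hmap2 : algebraMap (Polynomial ℚ) K (1 + Polynomial.X ^ 2) = 1 + q ^ 2 := by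
    simp [q, RatFunc.algebraMap_X]
  rw [qb, hmap, hmap2]
  have h1 : (1 : ℤ) - (1 + m : ℕ) = -(m : ℤ) := by push_cast; ring
  rw [h1, zpow_neg, zpow_natCast]
  have hqm : q ^ m ≠ 0 := pow_ne_zero _ hq
  have e1 : (-q) ^ (1 + m) = (-1) ^ (1 + m) * (q * q ^ m) := by
    rw [neg_pow]; ring
  have e2 : q⁻¹ ^ (1 + m) = (q * q ^ m)⁻¹ := by
    rw [inv_pow]; exact congrArg Inv.inv (by ring)
  have e3 : q ^ (2 * (1 + m)) = (q * q ^ m) ^ 2 := by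
    rw [pow_mul']; ring
  rw [e1, e2, e3]
  generalize q ^ m = y at hqm ⊢
  generalize ((-1 : K)) ^ (1 + m) = ε
  have hqy : q * y ≠ 0 := mul_ne_zero hq hqm
  rw [div_eq_div_iff hden hd]
  field_simp
  ring

lemma qb_good {s : ℕ} (hs : 1 ≤ s) : Good (1 - (s : ℤ)) (qb q s) := by
  refine ⟨1 - (-1) ^ s * Polynomial.X ^ (2 * s), 1 + Polynomial.X ^ 2, ?_, ?_, qb_eq s hs⟩
  · have h2 : 2 * s ≠ 0 := by omega
    simp [Polynomial.coeff_zero_eq_eval_zero, zero_pow h2]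
  · simp [Polynomial.coeff_zero_eq_eval_zero]

lemma two_dvd_mul_pred (x : ℤ) : (2 : ℤ) ∣ x * (x - 1) := by
  rcases Int.even_or_odd x with ⟨k, hk⟩ | ⟨k, hk⟩
  · exact ⟨k * (x - 1), by rw [hk]; ring⟩
  · exact ⟨x * k, by rw [hk]; ring⟩

lemma gauss_sum (r : ℕ) : 2 * (∑ t ∈ Finset.range r, (t : ℤ)) = r * r - r := by
  induction r with
  | zero => simp
  | succ n ih =>
    rw [Finset.sum_range_succ, mul_add, ih]
    push_cast
    ring

lemma good_X19 (a c r : ℕ) (hca : c ≤ a) (hrc : r ≤ c) :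
    Good (zf ((a : ℤ) - r) r ((c : ℤ) - r) + ((c : ℤ) - r)) (X19 a c r) := by
  -- the numerator product
  have hBmap : (∏ t ∈ Finset.range r, ((1 : K) + (-(q ^ 2)) ^ (t + 1)))
      = algebraMap (Polynomial ℚ) K
        (∏ t ∈ Finset.range r, (1 + (-(Polynomial.X ^ 2)) ^ (t + 1))) := by
    rw [map_prod]
    refine Finset.prod_congr rfl fun t _ => ?_
    simp [q, RatFunc.algebraMap_X]
  have hBc : (∏ t ∈ Finset.range r, ((1 : Polynomial ℚ) + (-(Polynomial.X ^ 2)) ^ (t + 1))).coeff 0 = 1 := by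
    rw [Polynomial.coeff_zero_eq_eval_zero, Polynomial.eval_prod]
    refine Finset.prod_eq_one fun t _ => ?_
    simp
  have gB : Good 0 (∏ t ∈ Finset.range r, ((1 : K) + (-(q ^ 2)) ^ (t + 1))) := by
    rw [hBmap]; exact Good.map hBc
  -- the (1 - q²)^r factor
  have hCmap : ((1 : K) - q ^ 2) ^ r
      = algebraMap (Polynomial ℚ) K ((1 - Polynomial.X ^ 2) ^ r) := by
    rw [map_pow]
    congr 1
    simp [q, RatFunc.algebraMap_X]
  have hCc : (((1 : Polynomial ℚ) - Polynomial.X ^ 2) ^ r).coeff 0 = 1 := by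
    simp [Polynomial.coeff_zero_eq_eval_zero]
  have gC : Good 0 (((1 : K) - q ^ 2) ^ r) := by
    rw [hCmap]; exact Good.map hCc
  -- the qb product
  have gQ : Good (∑ t ∈ Finset.range r, (1 - ((a - t : ℕ) : ℤ)))
      (∏ t ∈ Finset.range r, qb q (a - t)) := by
    refine Good.prod fun t ht => ?_
    exact qb_good (by omega)
  have gX : Good ((((r : ℤ) * c - (3 * (r : ℤ) ^ 2 + r) / 2) + 0) -
      (0 + ∑ t ∈ Finset.range r, (1 - ((a - t : ℕ) : ℤ))) +
      (-((a : ℤ) * ((a : ℤ) - 1)) / 2 - (c : ℤ) * ((c : ℤ) - 1) / 2 + c)) (X19 a c r) :=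
    (((Good.zpow _).mul gB).div (gC.mul gQ)).mul (Good.zpow _)
  refine gX.congr ?_
  -- now the integer arithmetic
  have hsum : (∑ t ∈ Finset.range r, (1 - ((a - t : ℕ) : ℤ)))
      = r * (1 - (a : ℤ)) + ∑ t ∈ Finset.range r, (t : ℤ) := by
    have h1 : ∀ t ∈ Finset.range r, (1 - ((a - t : ℕ) : ℤ)) = (1 - (a : ℤ)) + t := by
      intro t ht
      have ht' : t ≤ a := by
        have := Finset.mem_range.mp ht; omega
      rw [Nat.cast_sub ht']
      ring
    rw [Finset.sum_congr rfl h1, Finset.sum_add_distrib, Finset.sum_const,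
      Finset.card_range, nsmul_eq_mul]
  rw [hsum, zf]
  have hS := gauss_sum r
  have h3 : (3 * (r : ℤ) ^ 2 + r) / 2 * 2 = 3 * (r : ℤ) ^ 2 + r :=
    Int.ediv_mul_cancel (by
      obtain ⟨k, hk⟩ := two_dvd_mul_pred (r : ℤ)
      exact ⟨k + r ^ 2 + r, by linear_combination hk⟩)
  have h1 : -((a : ℤ) * ((a : ℤ) - 1)) / 2 * 2 = -((a : ℤ) * ((a : ℤ) - 1)) :=
    Int.ediv_mul_cancel ((two_dvd_mul_pred (a : ℤ)).neg_right)
  have h2 : (c : ℤ) * ((c : ℤ) - 1) / 2 * 2 = (c : ℤ) * ((c : ℤ) - 1) :=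
    Int.ediv_mul_cancel (two_dvd_mul_pred (c : ℤ))
  have h4 : -(((a : ℤ) - r) * (((a : ℤ) - r) - 1)) / 2 * 2
      = -(((a : ℤ) - r) * (((a : ℤ) - r) - 1)) :=
    Int.ediv_mul_cancel ((two_dvd_mul_pred ((a : ℤ) - r)).neg_right)
  have h5 : ((c : ℤ) - r) * (((c : ℤ) - r) - 1) / 2 * 2
      = ((c : ℤ) - r) * (((c : ℤ) - r) - 1) :=
    Int.ediv_mul_cancel (two_dvd_mul_pred ((c : ℤ) - r))
  refine mul_right_cancel₀ (b := (2 : ℤ)) two_ne_zero ?_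
  linear_combination -h3 + h1 - h2 - hS - h4 + h5

/-- With `d_r = z(a−r, r, c−r) + (c−r)`, there is a sign
`σ ∈ {1,−1}` with `σ q^{−d_r} X_r ∈ 1 + qA₀`; in particular `X_r ∈ q^{d_r}A₀` and
`X_r ∉ q^{d_r+1}A₀`. -/
theorem statement19 (a c r : ℕ) (hca : c ≤ a) (hrc : r ≤ c) :
    ∃ σ : K, (σ = 1 ∨ σ = -1) ∧
      (∃ f ∈ A0,
        σ * q ^ (-(zf ((a : ℤ) - r) r ((c : ℤ) - r) + ((c : ℤ) - r))) * X19 a c r =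
          1 + q * f) ∧
      (∃ f ∈ A0,
        X19 a c r = q ^ (zf ((a : ℤ) - r) r ((c : ℤ) - r) + ((c : ℤ) - r)) * f) ∧
      ¬∃ f ∈ A0,
        X19 a c r = q ^ (zf ((a : ℤ) - r) r ((c : ℤ) - r) + ((c : ℤ) - r) + 1) * f := by
  obtain ⟨N, D, hN, hD, hEq⟩ := good_X19 a c r hca hrc
  set d : ℤ := zf ((a : ℤ) - r) r ((c : ℤ) - r) + ((c : ℤ) - r) with hd
  have hD0 : algebraMap (Polynomial ℚ) K D ≠ 0 := algMap_ne_zero hD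
  have hN0 : algebraMap (Polynomial ℚ) K N ≠ 0 := algMap_ne_zero hN
  have hq := q_ne_zero
  have hqd : q ^ d ≠ 0 := zpow_ne_zero _ hq
  refine ⟨1, Or.inl rfl, ?_, ?_, ?_⟩
  · -- σ q^{-d} X = 1 + q f
    set M : Polynomial ℚ := (N - D).divX with hM
    refine ⟨algebraMap (Polynomial ℚ) K M / algebraMap (Polynomial ℚ) K D,
      ⟨M, D, hD ▸ one_ne_zero, rfl⟩, ?_⟩
    have hXM : Polynomial.X * M = N - D := by
      have h0 := Polynomial.X_mul_divX_add (N - D)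
      rwa [Polynomial.coeff_sub, hN, hD, sub_self, map_zero, add_zero] at h0
    have hMD : q * algebraMap (Polynomial ℚ) K M
        = algebraMap (Polynomial ℚ) K N - algebraMap (Polynomial ℚ) K D := by
      have h0 := congrArg (algebraMap (Polynomial ℚ) K) hXM
      rwa [map_mul, map_sub, RatFunc.algebraMap_X] at h0
    have hqq : q ^ (-d) * q ^ d = 1 := by
      rw [← zpow_add₀ q_ne_zero]; simp
    rw [hEq, one_mul, ← mul_div_assoc, ← mul_assoc, hqq, one_mul]
    rw [show (1 : K) + q * (algebraMap (Polynomial ℚ) K M / algebraMap (Polynomial ℚ) K D)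
        = (algebraMap (Polynomial ℚ) K D + q * algebraMap (Polynomial ℚ) K M) /
          algebraMap (Polynomial ℚ) K D by field_simp]
    rw [hMD]
    congr 1
    ring
  · -- X = q^d f
    exact ⟨algebraMap (Polynomial ℚ) K N / algebraMap (Polynomial ℚ) K D,
      ⟨N, D, hD ▸ one_ne_zero, rfl⟩, by rw [hEq, mul_div_assoc]⟩
  · -- X ∉ q^{d+1} A0
    rintro ⟨f, ⟨p, ρ, hρ, rfl⟩, hf⟩
    rw [hEq] at hf
    have hρ0 : algebraMap (Polynomial ℚ) K ρ ≠ 0 := algMap_ne_zero' hρ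
    rw [zpow_add_one₀ q_ne_zero] at hf
    have h4 : algebraMap (Polynomial ℚ) K N * algebraMap (Polynomial ℚ) K ρ
        = q * algebraMap (Polynomial ℚ) K p * algebraMap (Polynomial ℚ) K D := by
      apply mul_left_cancel₀ hqd
      field_simp at hf
      linear_combination (q ^ d) * hf
    have h5 : algebraMap (Polynomial ℚ) K (N * ρ)
        = algebraMap (Polynomial ℚ) K (Polynomial.X * p * D) := by
      rw [map_mul, map_mul, map_mul, RatFunc.algebraMap_X]
      exact h4
    have h6 := RatFunc.algebraMap_injective ℚ h5
    have h7 := congrArg (fun p : Polynomial ℚ => p.coeff 0) h6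
    simp only [coeff0_mul, hN, one_mul] at h7
    rw [Polynomial.coeff_zero_eq_eval_zero] at h7
    simp at h7
    rw [Polynomial.coeff_zero_eq_eval_zero] at hρ
    exact hρ h7

end OSP
end
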